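/- (Lemma 2) Let (d_n) and (p_n) be sequences with 2 ≤ d_n ≤ n, d_n = O(log n) and C(n, d_n)·p_n = O(n·log n). Draw a random d_n-uniform hypergraph on the vertex set [n] by including each d_n-element subset of [n] as a hyperedge independently with probability p_n. Let R_big ⊆ [n] be any (deterministic) subset with |R_big| = O(n / (log n)^7), and let R_res be the subset of R_big obtained by deleting every node of R_big that lies in some sampled hyperedge containing another node of R_big. Then for every ε > 0, Pr(|R_res| ≥ (1 − ε)·|R_big|) → 1 as n → ∞. -/

import Mathlib

set_option maxHeartbeats 1000000

open MeasureTheory Filter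
open scoped ENNReal

/-- Potential hyperedges: `d`-element subsets of `[n]`. -/
abbrev Edge (n d : ℕ) := {E : Finset (Fin n) // E.card = d}

/-- Bernoulli measure on `Bool` with parameter `q` (clamped to `[0,1]`). -/
noncomputable def bern (q : ℝ) : Measure Bool :=
  (PMF.bernoulli (min (Real.toNNReal q) 1) (min_le_right _ _)).toMeasure

instance (q : ℝ) : IsProbabilityMeasure (bern q) := by
  unfold bern; infer_instance

/-- Random `d`-uniform hypergraph on `[n]`: each `d`-element subset is a hyperedge
independently with probability `p`. -/
noncomputable def hyperMeasure (n d : ℕ) (p : ℝ) : Measure (Edge n d → Bool) :=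
  Measure.pi fun _ : Edge n d => bern p

open scoped Classical in
/-- The residual set: nodes of `R` that do not lie in any sampled hyperedge containing
another node of `R`. -/
noncomputable def Rres {n d : ℕ} (R : Finset (Fin n)) (ω : Edge n d → Bool) :
    Finset (Fin n) :=
  R.filter (fun v => ¬ ∃ E : Edge n d, ω E = true ∧ v ∈ E.1 ∧ ∃ w ∈ E.1, w ∈ R ∧ w ≠ v)

instance (n d : ℕ) (p : ℝ) : IsProbabilityMeasure (hyperMeasure n d p) := by
  unfold hyperMeasure; infer_instance

lemma allMeasurable {n d : ℕ} (s : Set (Edge n d → Bool)) : MeasurableSet s :=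
  s.to_countable.measurableSet

lemma bern_true (q : ℝ) : bern q {true} ≤ ENNReal.ofReal q := by
  unfold bern
  rw [PMF.toMeasure_apply_singleton _ _ (measurableSet_singleton _)]
  simp [PMF.bernoulli_apply]
  exact Or.inl le_rfl

lemma cyl_le (n d : ℕ) (p : ℝ) (E : Edge n d) :
    hyperMeasure n d p {ω | ω E = true} ≤ ENNReal.ofReal p := by
  classical
  have hset : {ω : Edge n d → Bool | ω E = true} =
      Set.pi Set.univ (fun F => if F = E then ({true} : Set Bool) else Set.univ) := by
    ext ω
    simp only [Set.mem_setOf_eq, Set.mem_pi, Set.mem_univ, forall_true_left]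
    constructor
    · intro h F
      by_cases hF : F = E <;> simp [hF, h]
    · intro h
      have := h E
      simpa using this
  rw [hyperMeasure, hset, Measure.pi_pi]
  have : ∀ F : Edge n d, bern p (if F = E then ({true} : Set Bool) else Set.univ)
      = if F = E then bern p {true} else 1 := by
    intro F; by_cases hF : F = E
    · simp [hF]
    · rw [if_neg hF, if_neg hF]; exact measure_univ
  simp_rw [this, Finset.prod_ite_eq' Finset.univ E (fun _ => bern p {true})]
  simpa using bern_true p

lemma count_pairs {n d : ℕ} (v w : Fin n) (hvw : w ≠ v) :
    (Finset.univ.filter (fun E : Edge n d => v ∈ E.1 ∧ w ∈ E.1)).card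
      ≤ (n - 2).choose (d - 2) := by
  classical
  have hcard : ((Finset.univ \ {v, w} : Finset (Fin n)).powersetCard (d - 2)).card
      = (n - 2).choose (d - 2) := by
    rw [Finset.card_powersetCard, Finset.card_sdiff_of_subset (by simp)]
    congr 1
    simp [Finset.card_insert_of_notMem, hvw.symm, Finset.card_univ]
  rw [← hcard]
  apply Finset.card_le_card_of_injOn (fun E => E.1 \ {v, w})
  · intro E hE
    simp only [Finset.mem_coe, Finset.mem_filter] at hE
    obtain ⟨-, hv, hw⟩ := hE
    rw [Finset.mem_coe, Finset.mem_powersetCard]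
    constructor
    · exact Finset.sdiff_subset_sdiff (Finset.subset_univ _) le_rfl
    · rw [Finset.card_sdiff_of_subset (by intro x hx; simp at hx; rcases hx with h | h <;> simp [h, hv, hw]),
        E.2]
      congr 1
      simp [Finset.card_insert_of_notMem, hvw.symm]
  · intro E hE F hF h
    simp only [Finset.mem_coe, Finset.mem_filter] at hE hF
    have hsub : ({v, w} : Finset (Fin n)) ⊆ E.1 := by
      intro x hx; simp at hx; rcases hx with h | h <;> simp [h, hE.2.1, hE.2.2]
    have hsub' : ({v, w} : Finset (Fin n)) ⊆ F.1 := by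
      intro x hx; simp at hx; rcases hx with h | h <;> simp [h, hF.2.1, hF.2.2]
    simp only [] at h
    have : E.1 \ {v, w} ∪ {v, w} = F.1 \ {v, w} ∪ {v, w} := by rw [h]
    rwa [Finset.sdiff_union_of_subset hsub, Finset.sdiff_union_of_subset hsub',
      ← Subtype.ext_iff] at this

lemma choose_id (m k : ℕ) :
    (k + 2) * (k + 1) * (m + 2).choose (k + 2) = (m + 2) * (m + 1) * m.choose k := by
  have h1 : (m + 1) * m.choose k = (m + 1).choose (k + 1) * (k + 1) :=
    Nat.add_one_mul_choose_eq m k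
  have h2 : (m + 2) * (m + 1).choose (k + 1) = (m + 2).choose (k + 2) * (k + 2) :=
    Nat.add_one_mul_choose_eq (m + 1) (k + 1)
  calc (k + 2) * (k + 1) * (m + 2).choose (k + 2)
      = ((m + 2).choose (k + 2) * (k + 2)) * (k + 1) := by ring
    _ = ((m + 2) * (m + 1).choose (k + 1)) * (k + 1) := by rw [h2]
    _ = (m + 2) * ((m + 1).choose (k + 1) * (k + 1)) := by ring
    _ = (m + 2) * ((m + 1) * m.choose k) := by rw [h1]
    _ = (m + 2) * (m + 1) * m.choose k := by ring

/-- The per-`n` first-moment (Markov) bound. -/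
lemma key {n d : ℕ} (p ε : ℝ) (hp0 : 0 ≤ p) (hε : 0 < ε) (R : Finset (Fin n)) :
    hyperMeasure n d p {ω | (1 - ε) * (R.card : ℝ) ≤ ((Rres R ω).card : ℝ)}ᶜ
      ≤ ENNReal.ofReal ((R.card : ℝ) * ((n - 2).choose (d - 2) : ℝ) * p / ε) := by
  classical
  set μ := hyperMeasure n d p with hμ
  set bad : Fin n → (Edge n d → Bool) → Prop :=
    fun v ω => ∃ E : Edge n d, ω E = true ∧ v ∈ E.1 ∧ ∃ w ∈ E.1, w ∈ R ∧ w ≠ v with hbad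
  by_cases hR0 : R.card = 0
  · have : {ω : Edge n d → Bool | (1 - ε) * (R.card : ℝ) ≤ ((Rres R ω).card : ℝ)}ᶜ = ∅ := by
      ext ω
      simp only [Set.mem_compl_iff, Set.mem_setOf_eq, Set.mem_empty_iff_false, iff_false,
        not_not, hR0]
      push_cast
      nlinarith [Nat.cast_nonneg (α := ℝ) (Rres R ω).card]
    rw [this]
    simp only [measure_empty]
    positivity
  have hR1 : (1 : ℝ) ≤ R.card := by
    have : 1 ≤ R.card := Nat.one_le_iff_ne_zero.mpr hR0
    exact_mod_cast this
  have hRpos : (0:ℝ) < R.card := lt_of_lt_of_le one_pos hR1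
  -- card identity
  have hcards : ∀ ω : Edge n d → Bool,
      ((R.filter (fun v => bad v ω)).card : ℝ) + ((Rres R ω).card : ℝ) = R.card := by
    intro ω
    have := Finset.card_filter_add_card_filter_not (s := R) (p := fun v => bad v ω)
    rw [Rres]
    exact_mod_cast congrArg (Nat.cast : ℕ → ℝ) this
  -- inclusion into Markov event
  have hsub : {ω : Edge n d → Bool | (1 - ε) * (R.card : ℝ) ≤ ((Rres R ω).card : ℝ)}ᶜ ⊆
      {ω | ENNReal.ofReal (ε * R.card) ≤ (((R.filter (fun v => bad v ω)).card : ℕ) : ℝ≥0∞)} := by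
    intro ω hω
    simp only [Set.mem_compl_iff, Set.mem_setOf_eq, not_le] at hω
    simp only [Set.mem_setOf_eq]
    have h2 := hcards ω
    have : ε * (R.card : ℝ) ≤ ((R.filter (fun v => bad v ω)).card : ℝ) := by nlinarith
    calc ENNReal.ofReal (ε * R.card) ≤ ENNReal.ofReal ((R.filter (fun v => bad v ω)).card : ℝ) :=
          ENNReal.ofReal_le_ofReal this
      _ = _ := ENNReal.ofReal_natCast _
  -- Markov
  have hmeas : Measurable fun ω : Edge n d → Bool =>
      (((R.filter (fun v => bad v ω)).card : ℕ) : ℝ≥0∞) := fun s _ => allMeasurable _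
  have hne0 : ENNReal.ofReal (ε * R.card) ≠ 0 := by
    simp only [ne_eq, ENNReal.ofReal_eq_zero, not_le]
    positivity
  have markov := MeasureTheory.meas_ge_le_lintegral_div (μ := μ) hmeas.aemeasurable hne0
    ENNReal.ofReal_ne_top
  -- expectation
  have hexp : ∫⁻ ω, (((R.filter (fun v => bad v ω)).card : ℕ) : ℝ≥0∞) ∂μ
      = ∑ v ∈ R, μ {ω | bad v ω} := by
    have hrepr : ∀ ω : Edge n d → Bool,
        (((R.filter (fun v => bad v ω)).card : ℕ) : ℝ≥0∞)
          = ∑ v ∈ R, Set.indicator {ω' | bad v ω'} (fun _ => (1:ℝ≥0∞)) ω := by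
      intro ω
      rw [Finset.card_filter]
      push_cast
      refine Finset.sum_congr rfl fun v _ => ?_
      rw [Set.indicator_apply]
      simp [Set.mem_setOf_eq]
    simp_rw [hrepr]
    rw [lintegral_finset_sum _ (fun v _ => Measurable.indicator measurable_const (allMeasurable _))]
    refine Finset.sum_congr rfl fun v _ => ?_
    exact lintegral_indicator_one (allMeasurable _)
  -- union bound per vertex
  have hver : ∀ v ∈ R, μ {ω | bad v ω}
      ≤ ((R.card : ℝ≥0∞) * ((n - 2).choose (d - 2) : ℝ≥0∞)) * ENNReal.ofReal p := by
    intro v _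
    set S : Finset (Edge n d) :=
      Finset.univ.filter (fun E : Edge n d => v ∈ E.1 ∧ ∃ w ∈ E.1, w ∈ R ∧ w ≠ v) with hS
    have hsub2 : {ω : Edge n d → Bool | bad v ω} ⊆ ⋃ E ∈ S, {ω | ω E = true} := by
      intro ω hω
      obtain ⟨E, hE1, hE2, hE3⟩ := hω
      have hES : E ∈ S := by
        rw [hS]; exact Finset.mem_filter.mpr ⟨Finset.mem_univ _, hE2, hE3⟩
      exact Set.mem_biUnion hES hE1
    calc μ {ω | bad v ω} ≤ μ (⋃ E ∈ S, {ω | ω E = true}) := measure_mono hsub2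
      _ ≤ ∑ E ∈ S, μ {ω | ω E = true} := measure_biUnion_finset_le _ _
      _ ≤ ∑ _E ∈ S, ENNReal.ofReal p := Finset.sum_le_sum fun E _ => cyl_le n d p E
      _ = (S.card : ℝ≥0∞) * ENNReal.ofReal p := by rw [Finset.sum_const, nsmul_eq_mul]
      _ ≤ _ := by
        apply mul_le_mul_left
        have hScard : S.card ≤ R.card * (n - 2).choose (d - 2) := by
          have hsub3 : S ⊆ (R.erase v).biUnion
              (fun w => Finset.univ.filter (fun E : Edge n d => v ∈ E.1 ∧ w ∈ E.1)) := by
            intro E hE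
            simp only [hS, Finset.mem_filter, Finset.mem_univ, true_and] at hE
            obtain ⟨hv, w, hwE, hwR, hwv⟩ := hE
            refine Finset.mem_biUnion.mpr ⟨w, Finset.mem_erase.mpr ⟨hwv, hwR⟩, ?_⟩
            simp [hv, hwE]
          calc S.card ≤ _ := Finset.card_le_card hsub3
            _ ≤ ∑ w ∈ R.erase v, (Finset.univ.filter
                (fun E : Edge n d => v ∈ E.1 ∧ w ∈ E.1)).card := Finset.card_biUnion_le
            _ ≤ ∑ _w ∈ R.erase v, (n - 2).choose (d - 2) := by
                refine Finset.sum_le_sum fun w hw => ?_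
                exact count_pairs v w (Finset.mem_erase.mp hw).1
            _ = (R.erase v).card * (n - 2).choose (d - 2) := by
                rw [Finset.sum_const, smul_eq_mul]
            _ ≤ R.card * (n - 2).choose (d - 2) :=
                Nat.mul_le_mul_right _ (Finset.card_le_card (Finset.erase_subset _ _))
        calc (S.card : ℝ≥0∞) ≤ ((R.card * (n - 2).choose (d - 2) : ℕ) : ℝ≥0∞) := by
              exact_mod_cast hScard
          _ = _ := by push_cast; ring
  -- combine
  have htot : ∫⁻ ω, (((R.filter (fun v => bad v ω)).card : ℕ) : ℝ≥0∞) ∂μ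
      ≤ (R.card : ℝ≥0∞) * (((R.card : ℝ≥0∞) * ((n - 2).choose (d - 2) : ℝ≥0∞)) *
          ENNReal.ofReal p) := by
    rw [hexp]
    calc ∑ v ∈ R, μ {ω | bad v ω}
        ≤ ∑ _v ∈ R, ((R.card : ℝ≥0∞) * ((n - 2).choose (d - 2) : ℝ≥0∞)) * ENNReal.ofReal p :=
          Finset.sum_le_sum hver
      _ = _ := by rw [Finset.sum_const, nsmul_eq_mul]
  have hfinal : μ {ω : Edge n d → Bool | (1 - ε) * (R.card : ℝ) ≤ ((Rres R ω).card : ℝ)}ᶜ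
      ≤ ((R.card : ℝ≥0∞) * (((R.card : ℝ≥0∞) * ((n - 2).choose (d - 2) : ℝ≥0∞)) *
          ENNReal.ofReal p)) / ENNReal.ofReal (ε * R.card) :=
    le_trans (measure_mono hsub) (le_trans markov (ENNReal.div_le_div_right htot _))
  refine le_trans hfinal ?_
  have hnum : (R.card : ℝ≥0∞) * (((R.card : ℝ≥0∞) * ((n - 2).choose (d - 2) : ℝ≥0∞)) *
      ENNReal.ofReal p) = ENNReal.ofReal ((R.card : ℝ) * ((R.card : ℝ) *
        ((n - 2).choose (d - 2) : ℝ) * p)) := by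
    rw [ENNReal.ofReal_mul (by positivity), ENNReal.ofReal_mul (by positivity),
      ENNReal.ofReal_mul (by positivity)]
    simp only [ENNReal.ofReal_natCast]
  rw [hnum, ← ENNReal.ofReal_div_of_pos (by positivity)]
  apply ENNReal.ofReal_le_ofReal
  rw [div_le_div_iff₀ (by positivity) (by positivity)]
  apply le_of_eq
  ring

/-- **Lemma 2.** If `dₙ = O(log n)`, `C(n,dₙ)·pₙ = O(n log n)` and
`|R_big| = O(n/(log n)^7)`, then with probability tending to `1`,
`|R_res| ≥ (1-ε)·|R_big|` for any fixed `ε > 0`. -/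
theorem lemma2 (d : ℕ → ℕ) (p : ℕ → ℝ) (R : ∀ n : ℕ, Finset (Fin n))
    (hd : ∀ᶠ n : ℕ in atTop, 2 ≤ d n ∧ d n ≤ n)
    (hp : ∀ n, p n ∈ Set.Icc (0 : ℝ) 1)
    (hdO : (fun n : ℕ => (d n : ℝ)) =O[atTop] fun n : ℕ => Real.log n)
    (hsamp : (fun n : ℕ => (n.choose (d n) : ℝ) * p n)
      =O[atTop] fun n : ℕ => (n : ℝ) * Real.log n)
    (hR : (fun n : ℕ => ((R n).card : ℝ)) =O[atTop] fun n : ℕ => (n : ℝ) / (Real.log n) ^ 7) :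
    ∀ ε : ℝ, 0 < ε →
      Tendsto (fun n : ℕ => hyperMeasure n (d n) (p n)
          {ω | (1 - ε) * ((R n).card : ℝ) ≤ ((Rres (R n) ω).card : ℝ)})
        atTop (nhds 1) := by
  intro ε hε
  obtain ⟨c1, hc1, hb1⟩ := hR.exists_pos
  obtain ⟨c2, hc2, hb2⟩ := hdO.exists_pos
  obtain ⟨c3, hc3, hb3⟩ := hsamp.exists_pos
  set K : ℝ := c1 * c2 ^ 2 * c3 / ε * 2 with hK
  -- eventual bound on the complement
  have hev : ∀ᶠ n : ℕ in atTop,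
      hyperMeasure n (d n) (p n)
        {ω | (1 - ε) * ((R n).card : ℝ) ≤ ((Rres (R n) ω).card : ℝ)}ᶜ
        ≤ ENNReal.ofReal (K * ((Real.log n) ^ 4)⁻¹) := by
    filter_upwards [hd, hb1.bound, hb2.bound, hb3.bound, eventually_ge_atTop 3] with n hdn h1 h2
      h3 hn3
    refine le_trans (key (p n) ε (hp n).1 hε (R n)) (ENNReal.ofReal_le_ofReal ?_)
    obtain ⟨hd2, hdle⟩ := hdn
    set L := Real.log n with hLdef
    have hnR : (3 : ℝ) ≤ (n : ℝ) := by exact_mod_cast hn3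
    have hL1 : (1 : ℝ) ≤ L := by
      rw [hLdef, Real.le_log_iff_exp_le (by positivity)]
      calc Real.exp 1 ≤ 2.7182818286 := Real.exp_one_lt_d9.le
        _ ≤ (n : ℝ) := by linarith
    have hLpos : (0 : ℝ) < L := lt_of_lt_of_le one_pos hL1
    have hn1 : (0 : ℝ) < (n : ℝ) - 1 := by linarith
    have hnpos : (0 : ℝ) < (n : ℝ) := by linarith
    obtain ⟨k, hk⟩ : ∃ k, d n = k + 2 := ⟨d n - 2, by omega⟩
    obtain ⟨m, hm⟩ : ∃ m, n = m + 2 := ⟨n - 2, by omega⟩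
    have hidR : ((d n : ℝ)) * ((d n : ℝ) - 1) * ((n.choose (d n) : ℕ) : ℝ)
        = (n : ℝ) * ((n : ℝ) - 1) * (((n - 2).choose (d n - 2) : ℕ) : ℝ) := by
      have hcast : (((k + 2) * (k + 1) * (m + 2).choose (k + 2) : ℕ) : ℝ)
          = (((m + 2) * (m + 1) * m.choose k : ℕ) : ℝ) := by exact_mod_cast choose_id m k
      have e1 : n - 2 = m := by omega
      have e2 : d n - 2 = k := by omega
      rw [e1, e2, hk, hm]
      push_cast at hcast ⊢
      linear_combination hcast
    have hC2 : (((n - 2).choose (d n - 2) : ℕ) : ℝ)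
        = (d n : ℝ) * ((d n : ℝ) - 1) * ((n.choose (d n) : ℕ) : ℝ)
          / ((n : ℝ) * ((n : ℝ) - 1)) := by
      rw [eq_div_iff (by positivity)]
      linear_combination -hidR
    rw [Real.norm_eq_abs, Real.norm_eq_abs] at h1 h2 h3
    have hRb : ((R n).card : ℝ) ≤ c1 * ((n : ℝ) / L ^ 7) := by
      have := h1
      rw [abs_of_nonneg (Nat.cast_nonneg _),
        abs_of_nonneg (div_nonneg (Nat.cast_nonneg _) (pow_nonneg hLpos.le 7))] at this
      exact this
    have hdb : (d n : ℝ) ≤ c2 * L := by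
      have := h2
      rw [abs_of_nonneg (Nat.cast_nonneg _), abs_of_nonneg hLpos.le] at this
      exact this
    have hpn0 : 0 ≤ p n := (hp n).1
    have hCp : ((n.choose (d n) : ℕ) : ℝ) * p n ≤ c3 * ((n : ℝ) * L) := by
      have := h3
      rw [abs_of_nonneg (mul_nonneg (Nat.cast_nonneg _) hpn0),
        abs_of_nonneg (mul_nonneg (Nat.cast_nonneg _) hLpos.le)] at this
      exact this
    have hCp0 : (0:ℝ) ≤ ((n.choose (d n) : ℕ) : ℝ) * p n := by positivity
    have hd1 : (0:ℝ) ≤ (d n : ℝ) - 1 := by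
      have : (2:ℝ) ≤ (d n : ℝ) := by exact_mod_cast hd2
      linarith
    have hdd : (d n : ℝ) * ((d n : ℝ) - 1) ≤ (c2 * L) * (c2 * L) := by
      have hd1' : (d n : ℝ) - 1 ≤ c2 * L := by linarith
      have h0 : (0:ℝ) ≤ c2 * L := by positivity
      nlinarith [Nat.cast_nonneg (α := ℝ) (d n)]
    have hnum : ((R n).card : ℝ) * ((d n : ℝ) * ((d n : ℝ) - 1)
          * (((n.choose (d n) : ℕ) : ℝ) * p n))
        ≤ (c1 * ((n : ℝ) / L ^ 7)) * (((c2 * L) * (c2 * L)) * (c3 * ((n : ℝ) * L))) := by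
      have hR0 : (0:ℝ) ≤ ((R n).card : ℝ) := Nat.cast_nonneg _
      have hdd0 : (0:ℝ) ≤ (d n : ℝ) * ((d n : ℝ) - 1) := by positivity
      have t1 : (d n : ℝ) * ((d n : ℝ) - 1) * (((n.choose (d n) : ℕ) : ℝ) * p n)
          ≤ ((c2 * L) * (c2 * L)) * (c3 * ((n : ℝ) * L)) :=
        mul_le_mul hdd hCp hCp0 (by positivity)
      exact mul_le_mul hRb t1 (by positivity) (by positivity)
    calc ((R n).card : ℝ) * (((n - 2).choose (d n - 2) : ℕ) : ℝ) * p n / ε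
        = (((R n).card : ℝ) * ((d n : ℝ) * ((d n : ℝ) - 1)
            * (((n.choose (d n) : ℕ) : ℝ) * p n)))
            / ((n : ℝ) * ((n : ℝ) - 1)) / ε := by
          rw [hC2]; ring
      _ ≤ ((c1 * ((n : ℝ) / L ^ 7)) * (((c2 * L) * (c2 * L)) * (c3 * ((n : ℝ) * L))))
            / ((n : ℝ) * ((n : ℝ) - 1)) / ε := by
          gcongr
      _ = (c1 * c2 ^ 2 * c3 / ε) * ((n : ℝ) / ((n : ℝ) - 1)) * (L ^ 4)⁻¹ := by
          field_simp
      _ ≤ (c1 * c2 ^ 2 * c3 / ε) * 2 * (L ^ 4)⁻¹ := by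
          have hfrac : (n : ℝ) / ((n : ℝ) - 1) ≤ 2 := by
            rw [div_le_iff₀ hn1]; linarith
          have h0 : (0:ℝ) ≤ c1 * c2 ^ 2 * c3 / ε := by positivity
          have h4 : (0:ℝ) ≤ (L ^ 4)⁻¹ := by positivity
          have := mul_le_mul_of_nonneg_right (mul_le_mul_of_nonneg_left hfrac h0) h4
          linarith
      _ = K * (L ^ 4)⁻¹ := by rw [hK]
  -- the complement tends to 0
  have hKlim : Tendsto (fun n : ℕ => ENNReal.ofReal (K * ((Real.log n) ^ 4)⁻¹)) atTop (nhds 0) := by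
    have h2 : Tendsto (fun n : ℕ => ((Real.log n) ^ 4)⁻¹) atTop (nhds 0) :=
      tendsto_inv_atTop_zero.comp ((tendsto_pow_atTop (by norm_num)).comp
        (Real.tendsto_log_atTop.comp tendsto_natCast_atTop_atTop))
    have h1 : Tendsto (fun n : ℕ => K * ((Real.log n) ^ 4)⁻¹) atTop (nhds 0) := by
      simpa using h2.const_mul K
    have := (ENNReal.continuous_ofReal.tendsto 0).comp h1
    simpa [Function.comp_def] using this
  have hcompl : Tendsto (fun n : ℕ => hyperMeasure n (d n) (p n)
      {ω | (1 - ε) * ((R n).card : ℝ) ≤ ((Rres (R n) ω).card : ℝ)}ᶜ) atTop (nhds 0) := by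
    refine tendsto_of_tendsto_of_tendsto_of_le_of_le' tendsto_const_nhds hKlim
      (Eventually.of_forall fun n => zero_le) hev
  have heq : ∀ n : ℕ, hyperMeasure n (d n) (p n)
      {ω | (1 - ε) * ((R n).card : ℝ) ≤ ((Rres (R n) ω).card : ℝ)}
      = 1 - hyperMeasure n (d n) (p n)
        {ω | (1 - ε) * ((R n).card : ℝ) ≤ ((Rres (R n) ω).card : ℝ)}ᶜ := by
    intro n
    have h := prob_compl_eq_one_sub (μ := hyperMeasure n (d n) (p n))
      (s := {ω | (1 - ε) * ((R n).card : ℝ) ≤ ((Rres (R n) ω).card : ℝ)}ᶜ) (allMeasurable _)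
    rwa [compl_compl] at h
  have hfin := ((ENNReal.continuous_sub_left ENNReal.one_ne_top).tendsto 0).comp hcompl
  simp only [Function.comp_def, tsub_zero] at hfin
  simp_rw [heq]
  exact hfin
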